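/- Under NN-vulnerability with uniform strengths, a d*-regular network g in which any two countries have at most k common neighbors, with k < d* − 1 and γ ≥ (d*+1)/(d*−k−1), has no vulnerable country, and moreover no country is vulnerable at g + jk for any non-link jk. -/
import Mathlib


open Finset

/-- The allies (neighbors) of `i` in network `g`, as a `Finset`. -/
noncomputable def nbrs {V : Type*} [Fintype V] (g : SimpleGraph V) (i : V) : Finset V :=
  @Finset.filter _ (fun j => g.Adj i j) (Classical.decPred _) Finset.univ

/-- The network `g` with the alliance `jk` added. -/
def addE {V : Type*} (g : SimpleGraph V) (j k : V) : SimpleGraph V :=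
  g ⊔ SimpleGraph.fromEdgeSet {s(j, k)}

/-- NN-vulnerability with uniform strengths `M C = |C|` and constant `γ`: country `i` is
NN-vulnerable at `g` if some aggressor `j` and coalition `C ⊆ {j} ∪ N_j(g)` with `j ∈ C`,
`i ∉ C`, satisfies `|C| > γ · (1 + |N_i(g) \ C|)`. -/
def NNVul {V : Type*} [Fintype V] [DecidableEq V] (g : SimpleGraph V) (γ : ℝ) (i : V) :
    Prop :=
  ∃ (j : V) (C : Finset V),
    C ⊆ insert j (nbrs g j) ∧ j ∈ C ∧ i ∉ C ∧
    γ * (1 + ((nbrs g i) \ C).card) < (C.card : ℝ)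

lemma mem_nbrs {V : Type*} [Fintype V] {g : SimpleGraph V} {i x : V} :
    x ∈ nbrs g i ↔ g.Adj i x := by simp [nbrs]

lemma adj_addE {V : Type*} {g : SimpleGraph V} {u v a b : V} (huv : u ≠ v) :
    (addE g u v).Adj a b ↔ g.Adj a b ∨ (a = u ∧ b = v) ∨ (a = v ∧ b = u) := by
  simp only [addE, SimpleGraph.sup_adj, SimpleGraph.fromEdgeSet_adj, Set.mem_singleton_iff,
    Sym2.eq_iff]
  constructor
  · rintro (h | ⟨h, -⟩)
    · exact Or.inl h
    · exact Or.inr h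
  · rintro (h | ⟨rfl, rfl⟩ | ⟨rfl, rfl⟩)
    · exact Or.inl h
    · exact Or.inr ⟨Or.inl ⟨rfl, rfl⟩, huv⟩
    · exact Or.inr ⟨Or.inr ⟨rfl, rfl⟩, huv.symm⟩

lemma nbrs_addE_left {V : Type*} [Fintype V] [DecidableEq V] {g : SimpleGraph V} {u v : V}
    (huv : u ≠ v) : nbrs (addE g u v) u = insert v (nbrs g u) := by
  ext x
  rw [mem_nbrs, adj_addE huv, mem_insert, mem_nbrs]
  constructor
  · rintro (h | ⟨-, rfl⟩ | ⟨h, -⟩)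
    · exact Or.inr h
    · exact Or.inl rfl
    · exact absurd h huv
  · rintro (rfl | h)
    · exact Or.inr (Or.inl ⟨rfl, rfl⟩)
    · exact Or.inl h

lemma nbrs_addE_other {V : Type*} [Fintype V] [DecidableEq V] {g : SimpleGraph V} {u v w : V}
    (huv : u ≠ v) (hwu : w ≠ u) (hwv : w ≠ v) : nbrs (addE g u v) w = nbrs g w := by
  ext x
  rw [mem_nbrs, adj_addE huv, mem_nbrs]
  constructor
  · rintro (h | ⟨rfl, -⟩ | ⟨rfl, -⟩)
    · exact h
    · exact absurd rfl hwu
    · exact absurd rfl hwv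
  · exact fun h => Or.inl h

lemma addE_comm {V : Type*} (g : SimpleGraph V) (u v : V) : addE g u v = addE g v u := by
  unfold addE
  rw [Sym2.eq_swap]

lemma bounds {n dstar k : ℕ}
    (g : SimpleGraph (Fin n))
    (hreg : ∀ w : Fin n, (nbrs g w).card = dstar)
    (hcommon : ∀ a b : Fin n, a ≠ b → ((nbrs g a) ∩ (nbrs g b)).card ≤ k)
    (u v : Fin n) (huv : u ≠ v) (hadj : ¬ g.Adj u v)
    (i j : Fin n) (C : Finset (Fin n))
    (hsub : C ⊆ insert j (nbrs (addE g u v) j)) (hjC : j ∈ C) (hiC : i ∉ C)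
    (hjv : j ≠ v) :
    (C.card ≤ dstar + 1 ∧ dstar ≤ ((nbrs (addE g u v) i) \ C).card + (k + 2)) ∨
    (C.card ≤ dstar + 2 ∧ dstar ≤ ((nbrs (addE g u v) i) \ C).card + (k + 1)) := by
  have hij : i ≠ j := by rintro rfl; exact hiC hjC
  -- a helper to convert intersection bounds into the sdiff bound
  have sdh : ∀ A : Finset (Fin n), (A \ C).card + (A ∩ C).card = A.card := fun A =>
    card_sdiff_add_card_inter A C
  by_cases hju : u = j
  · subst hju
    have hNj : nbrs (addE g u v) u = insert v (nbrs g u) := nbrs_addE_left huv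
    by_cases hiv : i = v
    · subst hiv
      -- i = v, j = u : coalition avoids v
      left
      have hCsub : C ⊆ insert u (nbrs g u) := by
        intro x hx
        have h1 := hsub hx
        rw [hNj, mem_insert, mem_insert] at h1
        rcases h1 with rfl | rfl | h
        · exact mem_insert_self _ _
        · exact absurd hx hiC
        · exact mem_insert_of_mem h
      have hc : C.card ≤ dstar + 1 :=
        (card_le_card hCsub).trans (by
          have := card_insert_le u (nbrs g u); rw [hreg] at this; omega)
      refine ⟨hc, ?_⟩
      have hNi : nbrs (addE g u i) i = insert u (nbrs g i) := by
        rw [addE_comm]; exact nbrs_addE_left huv.symm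
      have hACsub : nbrs (addE g u i) i ∩ C ⊆ insert u (nbrs g i ∩ nbrs g u) := by
        intro x hx
        rw [mem_inter, hNi, mem_insert] at hx
        obtain ⟨h1, h2⟩ := hx
        have h3 := hCsub h2
        rw [mem_insert] at h3
        rcases h3 with rfl | h3
        · exact mem_insert_self _ _
        · rcases h1 with rfl | h1
          · exact mem_insert_self _ _
          · exact mem_insert_of_mem (mem_inter.2 ⟨h1, h3⟩)
      have hAC : (nbrs (addE g u i) i ∩ C).card ≤ k + 1 :=
        (card_le_card hACsub).trans (by
          have h1 := card_insert_le u (nbrs g i ∩ nbrs g u)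
          have h2 := hcommon i u hij
          omega)
      have hcard : (nbrs (addE g u i) i).card = dstar + 1 := by
        rw [hNi, card_insert_of_notMem, hreg]
        rw [mem_nbrs]
        exact fun h => hadj h.symm
      have := sdh (nbrs (addE g u i) i)
      omega
    · -- j = u, i ∉ {u, v}
      have hiu : i ≠ u := hij
      have hNi : nbrs (addE g u v) i = nbrs g i := nbrs_addE_other huv hiu hiv
      have hcard : (nbrs (addE g u v) i).card = dstar := by rw [hNi, hreg]
      have hNjc : (nbrs (addE g u v) u).card = dstar + 1 := by
        rw [hNj, card_insert_of_notMem, hreg]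
        rw [mem_nbrs]
        exact hadj
      by_cases hadjiu : g.Adj i u
      · -- i is a g-neighbor of j = u : coalition avoids i, so card ≤ dstar + 1
        left
        have hiS : i ∈ insert u (nbrs (addE g u v) u) := by
          rw [hNj, mem_insert, mem_insert]
          exact Or.inr (Or.inr (mem_nbrs.2 hadjiu.symm))
        have hCsub : C ⊆ (insert u (nbrs (addE g u v) u)).erase i :=
          subset_erase.2 ⟨hsub, hiC⟩
        have hSc : (insert u (nbrs (addE g u v) u)).card ≤ dstar + 2 := by
          have h1 := card_insert_le u (nbrs (addE g u v) u)
          omega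
        have hc : C.card ≤ dstar + 1 := by
          have h1 := card_le_card hCsub
          rw [card_erase_of_mem hiS] at h1
          have h2 : 1 ≤ (insert u (nbrs (addE g u v) u)).card := card_pos.2 ⟨i, hiS⟩
          omega
        refine ⟨hc, ?_⟩
        have hACsub : nbrs (addE g u v) i ∩ C ⊆
            insert u (insert v (nbrs g i ∩ nbrs g u)) := by
          intro x hx
          rw [mem_inter, hNi] at hx
          obtain ⟨h1, h2⟩ := hx
          have h3 := hsub h2
          rw [hNj, mem_insert, mem_insert] at h3
          rcases h3 with rfl | rfl | h3
          · exact mem_insert_self _ _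
          · exact mem_insert_of_mem (mem_insert_self _ _)
          · exact mem_insert_of_mem (mem_insert_of_mem (mem_inter.2 ⟨h1, h3⟩))
        have hAC : (nbrs (addE g u v) i ∩ C).card ≤ k + 2 :=
          (card_le_card hACsub).trans (by
            have h1 := card_insert_le u (insert v (nbrs g i ∩ nbrs g u))
            have h2 := card_insert_le v (nbrs g i ∩ nbrs g u)
            have h3 := hcommon i u hij
            omega)
        have := sdh (nbrs (addE g u v) i)
        omega
      · -- i not a g-neighbor of j = u
        right
        have hc : C.card ≤ dstar + 2 :=
          (card_le_card hsub).trans (by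
            have h1 := card_insert_le u (nbrs (addE g u v) u)
            omega)
        refine ⟨hc, ?_⟩
        have hACsub : nbrs (addE g u v) i ∩ C ⊆ insert v (nbrs g i ∩ nbrs g u) := by
          intro x hx
          rw [mem_inter, hNi] at hx
          obtain ⟨h1, h2⟩ := hx
          have h3 := hsub h2
          rw [hNj, mem_insert, mem_insert] at h3
          rcases h3 with rfl | rfl | h3
          · exact absurd (mem_nbrs.1 h1) hadjiu
          · exact mem_insert_self _ _
          · exact mem_insert_of_mem (mem_inter.2 ⟨h1, h3⟩)
        have hAC : (nbrs (addE g u v) i ∩ C).card ≤ k + 1 :=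
          (card_le_card hACsub).trans (by
            have h1 := card_insert_le v (nbrs g i ∩ nbrs g u)
            have h2 := hcommon i u hij
            omega)
        have := sdh (nbrs (addE g u v) i)
        omega
  · -- j ∉ {u, v}
    left
    have hju' : j ≠ u := fun h => hju h.symm
    have hNj : nbrs (addE g u v) j = nbrs g j := nbrs_addE_other huv hju' hjv
    have hc : C.card ≤ dstar + 1 :=
      (card_le_card hsub).trans (by
        rw [hNj]
        have := card_insert_le j (nbrs g j); rw [hreg] at this; omega)
    refine ⟨hc, ?_⟩
    by_cases hiu : i = u
    · subst hiu
      have hNi : nbrs (addE g i v) i = insert v (nbrs g i) := nbrs_addE_left huv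
      have hcard : (nbrs (addE g i v) i).card = dstar + 1 := by
        rw [hNi, card_insert_of_notMem, hreg]
        rw [mem_nbrs]; exact hadj
      have hACsub : nbrs (addE g i v) i ∩ C ⊆
          insert j (insert v (nbrs g i ∩ nbrs g j)) := by
        intro x hx
        rw [mem_inter, hNi, mem_insert] at hx
        obtain ⟨h1, h2⟩ := hx
        have h3 := hsub h2
        rw [hNj, mem_insert] at h3
        rcases h3 with rfl | h3
        · exact mem_insert_self _ _
        · rcases h1 with rfl | h1
          · exact mem_insert_of_mem (mem_insert_self _ _)
          · exact mem_insert_of_mem (mem_insert_of_mem (mem_inter.2 ⟨h1, h3⟩))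
      have hAC : (nbrs (addE g i v) i ∩ C).card ≤ k + 2 :=
        (card_le_card hACsub).trans (by
          have h1 := card_insert_le j (insert v (nbrs g i ∩ nbrs g j))
          have h2 := card_insert_le v (nbrs g i ∩ nbrs g j)
          have h3 := hcommon i j hij
          omega)
      have := sdh (nbrs (addE g i v) i)
      omega
    · by_cases hiv : i = v
      · subst hiv
        have hNi : nbrs (addE g u i) i = insert u (nbrs g i) := by
          rw [addE_comm]; exact nbrs_addE_left huv.symm
        have hcard : (nbrs (addE g u i) i).card = dstar + 1 := by
          rw [hNi, card_insert_of_notMem, hreg]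
          rw [mem_nbrs]; exact fun h => hadj h.symm
        have hACsub : nbrs (addE g u i) i ∩ C ⊆
            insert j (insert u (nbrs g i ∩ nbrs g j)) := by
          intro x hx
          rw [mem_inter, hNi, mem_insert] at hx
          obtain ⟨h1, h2⟩ := hx
          have h3 := hsub h2
          rw [hNj, mem_insert] at h3
          rcases h3 with rfl | h3
          · exact mem_insert_self _ _
          · rcases h1 with rfl | h1
            · exact mem_insert_of_mem (mem_insert_self _ _)
            · exact mem_insert_of_mem (mem_insert_of_mem (mem_inter.2 ⟨h1, h3⟩))
        have hAC : (nbrs (addE g u i) i ∩ C).card ≤ k + 2 :=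
          (card_le_card hACsub).trans (by
            have h1 := card_insert_le j (insert u (nbrs g i ∩ nbrs g j))
            have h2 := card_insert_le u (nbrs g i ∩ nbrs g j)
            have h3 := hcommon i j hij
            omega)
        have := sdh (nbrs (addE g u i) i)
        omega
      · have hNi : nbrs (addE g u v) i = nbrs g i := nbrs_addE_other huv hiu hiv
        have hcard : (nbrs (addE g u v) i).card = dstar := by rw [hNi, hreg]
        have hACsub : nbrs (addE g u v) i ∩ C ⊆ insert j (nbrs g i ∩ nbrs g j) := by
          intro x hx
          rw [mem_inter, hNi] at hx
          obtain ⟨h1, h2⟩ := hx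
          have h3 := hsub h2
          rw [hNj, mem_insert] at h3
          rcases h3 with rfl | h3
          · exact mem_insert_self _ _
          · exact mem_insert_of_mem (mem_inter.2 ⟨h1, h3⟩)
        have hAC : (nbrs (addE g u v) i ∩ C).card ≤ k + 1 :=
          (card_le_card hACsub).trans (by
            have h1 := card_insert_le j (nbrs g i ∩ nbrs g j)
            have h2 := hcommon i j hij
            omega)
        have := sdh (nbrs (addE g u v) i)
        omega

lemma arith_aux {dstar k : ℕ} {γ : ℝ} (hk : k + 1 < dstar)
    (hγ : ((dstar : ℝ) + 1) / ((dstar : ℝ) - (k : ℝ) - 1) ≤ γ)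
    {c f : ℕ}
    (h : (c ≤ dstar + 1 ∧ dstar ≤ f + (k + 2)) ∨ (c ≤ dstar + 2 ∧ dstar ≤ f + (k + 1))) :
    (c : ℝ) ≤ γ * (1 + f) := by
  have hkd : (k : ℝ) + 2 ≤ (dstar : ℝ) := by exact_mod_cast hk
  have hD0 : (0 : ℝ) < (dstar : ℝ) - k - 1 := by linarith
  have hγD : (dstar : ℝ) + 1 ≤ γ * ((dstar : ℝ) - k - 1) := by
    rw [div_le_iff₀ hD0] at hγ; linarith
  have hγ1 : (1 : ℝ) ≤ γ := by nlinarith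
  rcases h with ⟨hc, hf⟩ | ⟨hc, hf⟩
  · have hc' : (c : ℝ) ≤ (dstar : ℝ) + 1 := by exact_mod_cast hc
    have hf' : (dstar : ℝ) - k - 1 ≤ 1 + f := by
      have : (dstar : ℝ) ≤ (f : ℝ) + (k + 2) := by exact_mod_cast hf
      linarith
    have h3 : γ * ((dstar : ℝ) - k - 1) ≤ γ * (1 + f) :=
      mul_le_mul_of_nonneg_left hf' (by linarith)
    linarith
  · have hc' : (c : ℝ) ≤ (dstar : ℝ) + 2 := by exact_mod_cast hc
    have hf' : (dstar : ℝ) - k ≤ 1 + f := by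
      have : (dstar : ℝ) ≤ (f : ℝ) + (k + 1) := by exact_mod_cast hf
      linarith
    have h3 : γ * ((dstar : ℝ) - k) ≤ γ * (1 + f) :=
      mul_le_mul_of_nonneg_left hf' (by linarith)
    have h4 : γ * ((dstar : ℝ) - k) = γ * ((dstar : ℝ) - k - 1) + γ := by ring
    linarith

/-- a `d*`-regular network in which any two countries have at most
`k < d* - 1` common allies, with `γ ≥ (d*+1)/(d*-k-1)`, has no NN-vulnerable country,
nor does any network obtained by adding one link. -/
theorem regular_network_not_vulnerable {n dstar k : ℕ} (γ : ℝ)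
    (hd : 2 ≤ dstar) (hk : k + 1 < dstar)
    (hγ : ((dstar : ℝ) + 1) / ((dstar : ℝ) - (k : ℝ) - 1) ≤ γ)
    (g : SimpleGraph (Fin n))
    (hreg : ∀ v : Fin n, (nbrs g v).card = dstar)
    (hcommon : ∀ u v : Fin n, u ≠ v → ((nbrs g u) ∩ (nbrs g v)).card ≤ k) :
    (∀ i : Fin n, ¬ NNVul g γ i) ∧
    (∀ u v : Fin n, u ≠ v → ¬ g.Adj u v → ∀ i : Fin n, ¬ NNVul (addE g u v) γ i) := by
  constructor
  · intro i hvul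
    obtain ⟨j, C, hsub, hjC, hiC, hlt⟩ := hvul
    have hij : i ≠ j := by rintro rfl; exact hiC hjC
    have hc : C.card ≤ dstar + 1 :=
      (card_le_card hsub).trans (by
        have := card_insert_le j (nbrs g j); rw [hreg] at this; omega)
    have hACsub : nbrs g i ∩ C ⊆ insert j (nbrs g i ∩ nbrs g j) := by
      intro x hx
      rw [mem_inter] at hx
      have hx2 := hsub hx.2
      rw [mem_insert] at hx2
      rcases hx2 with rfl | h
      · exact mem_insert_self _ _
      · exact mem_insert_of_mem (mem_inter.2 ⟨hx.1, h⟩)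
    have hAC : (nbrs g i ∩ C).card ≤ k + 1 :=
      (card_le_card hACsub).trans (by
        have h1 := card_insert_le j (nbrs g i ∩ nbrs g j)
        have h2 := hcommon i j hij
        omega)
    have hsd : (nbrs g i \ C).card + (nbrs g i ∩ C).card = dstar := by
      rw [card_sdiff_add_card_inter, hreg]
    have key := arith_aux hk hγ (c := C.card) (f := (nbrs g i \ C).card)
      (Or.inl ⟨hc, by omega⟩)
    linarith
  · intro u v huv hadj i hvul
    obtain ⟨j, C, hsub, hjC, hiC, hlt⟩ := hvul
    by_cases hjv : j = v
    · subst hjv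
      rw [addE_comm] at hsub hlt
      have hb := bounds g hreg hcommon j u huv.symm (fun h => hadj h.symm) i j C hsub hjC hiC
        huv.symm
      have key := arith_aux hk hγ hb
      linarith
    · have hb := bounds g hreg hcommon u v huv hadj i j C hsub hjC hiC hjv
      have key := arith_aux hk hγ hb
      linarith
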